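/- The uniform mixture over the order-8 subgroup G_456 of local symmetry operations (generated by the operations τ_4 : (x,y)↦(x⊕1,y⊕1), τ_5 : (x,t)↦(x⊕s, t⊕1), τ_6 : (y,s)↦(y⊕t, s⊕1)) projects every CHSH-type box with CHSH(R) ≥ 2 onto the chain {C(α)} = {αR_PR + (1−α)L_NPR : α ∈ [0,1]}, and preserves the CHSH value: CHSH(τ_erase(R)) = CHSH(R), where τ_erase := (1/|G_456|) Σ_{g ∈ G_456} g. -/

import Mathlib

open Finset

noncomputable section

/-- The index set of a CHSH-type box: `(x, y, s, t)`. -/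
abbrev Idx : Type := Fin 2 × Fin 2 × Fin 2 × Fin 2

def sgn : Fin 2 → ℝ := fun a => if a = 0 then 1 else -1

def corr (R : Idx → ℝ) (s t : Fin 2) : ℝ := ∑ x, ∑ y, sgn x * sgn y * R (x, y, s, t)

def CHSH (R : Idx → ℝ) : ℝ := corr R 0 0 + corr R 1 0 + corr R 0 1 - corr R 1 1

def IsBox (R : Idx → ℝ) : Prop :=
  (∀ p, 0 ≤ R p) ∧ (∀ s t, ∑ x, ∑ y, R (x, y, s, t) = 1) ∧
  (∀ x s t t', ∑ y, R (x, y, s, t) = ∑ y, R (x, y, s, t')) ∧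
  (∀ y t s s', ∑ x, R (x, y, s, t) = ∑ x, R (x, y, s', t))

def PRbox : Idx → ℝ := fun p => if p.1 + p.2.1 = p.2.2.1 * p.2.2.2 then 1/2 else 0

/-- `L_NPR = (1/2)R_PR + (1/2)L_∅`, with `L_∅` the maximally mixed box. -/
def LNPR : Idx → ℝ := fun p => (1/2) * PRbox p + (1/2) * (1/4)

/-- The noisy PR chain `C(α) = α·R_PR + (1−α)·L_NPR`. -/
def C (α : ℝ) : Idx → ℝ := fun p => α * PRbox p + (1 - α) * LNPR p

/-- `τ₄ : (x,y) ↦ (x⊕1, y⊕1)`. -/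
def f4 : Idx → Idx := fun p => (p.1 + 1, p.2.1 + 1, p.2.2.1, p.2.2.2)

/-- `τ₅ : (x,t) ↦ (x⊕s, t⊕1)`. -/
def f5 : Idx → Idx := fun p => (p.1 + p.2.2.1, p.2.1, p.2.2.1, p.2.2.2 + 1)

/-- `τ₆ : (y,s) ↦ (y⊕t, s⊕1)`. -/
def f6 : Idx → Idx := fun p => (p.1, p.2.1 + p.2.2.2, p.2.2.1 + 1, p.2.2.2)

theorem f4_inv : Function.Involutive f4 := by intro p; revert p; decide
theorem f5_inv : Function.Involutive f5 := by intro p; revert p; decide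
theorem f6_inv : Function.Involutive f6 := by intro p; revert p; decide

def g4 : Equiv.Perm Idx := f4_inv.toPerm
def g5 : Equiv.Perm Idx := f5_inv.toPerm
def g6 : Equiv.Perm Idx := f6_inv.toPerm

/-- The subgroup of local symmetry operations generated by `τ₄, τ₅, τ₆`. -/
def G456 : Subgroup (Equiv.Perm Idx) := Subgroup.closure {g4, g5, g6}

/-- The uniform mixture over `G456`: `τ_erase = (1/|G456|) Σ_{g ∈ G456} g`. -/
def erase456 (R : Idx → ℝ) : Idx → ℝ :=
  letI : Fintype ↥G456 := Fintype.ofFinite _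
  fun p => (Nat.card ↥G456 : ℝ)⁻¹ * ∑ g : ↥G456, R ((g : Equiv.Perm Idx) p)

/-- The rotation `τ₅ ∘ τ₆`, of order 4. -/
def a456 : Equiv.Perm Idx := g5 * g6

/-- Explicit list of the eight elements of `G456`. -/
def Gset : Finset (Equiv.Perm Idx) :=
  {1, a456, a456*a456, a456*a456*a456, g5, g5*a456, g5*a456*a456, g5*a456*a456*a456}

/-- The subgroup with carrier `Gset`. -/
def K456 : Subgroup (Equiv.Perm Idx) where
  carrier := ↑Gset
  one_mem' := by decide
  mul_mem' := by
    intro a b ha hb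
    have ha' : a ∈ Gset := ha
    have hb' : b ∈ Gset := hb
    fin_cases ha' <;> fin_cases hb' <;> exact Finset.mem_coe.mpr (by decide)
  inv_mem' := by
    intro a ha
    have ha' : a ∈ Gset := ha
    fin_cases ha' <;> exact Finset.mem_coe.mpr (by decide)

theorem hGK : G456 = K456 := by
  apply le_antisymm
  · rw [G456, Subgroup.closure_le]
    intro x hx
    simp only [Set.mem_insert_iff, Set.mem_singleton_iff] at hx
    rcases hx with h|h|h <;> subst h <;>
      exact (show _ ∈ (Gset : Set (Equiv.Perm Idx)) from Finset.mem_coe.mpr (by decide))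
  · intro x hx
    have h5 : g5 ∈ G456 := Subgroup.subset_closure (by simp)
    have h6 : g6 ∈ G456 := Subgroup.subset_closure (by simp)
    have ha : a456 ∈ G456 := mul_mem h5 h6
    have hx' : x ∈ Gset := hx
    fin_cases hx'
    · exact one_mem _
    · exact ha
    · exact mul_mem ha ha
    · exact mul_mem (mul_mem ha ha) ha
    · exact h5
    · exact mul_mem h5 ha
    · exact mul_mem (mul_mem h5 ha) ha
    · exact mul_mem (mul_mem (mul_mem h5 ha) ha) ha

theorem hGKset : (G456 : Set (Equiv.Perm Idx)) = ↑Gset := by rw [hGK]; rfl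

theorem hcard : Nat.card ↥G456 = 8 := by
  rw [hGK]
  rw [show (↥K456 : Type) = ↥(↑Gset : Set (Equiv.Perm Idx)) from rfl]
  rw [Nat.card_coe_set_eq, Set.ncard_coe_finset]
  decide

theorem erase_eq (R : Idx → ℝ) (p : Idx) :
    erase456 R p = (8:ℝ)⁻¹ * ∑ g ∈ Gset, R (g p) := by
  letI : Fintype ↥G456 := Fintype.ofFinite _
  show (Nat.card ↥G456 : ℝ)⁻¹ * ∑ g : ↥G456, R ((g : Equiv.Perm Idx) p) = _
  rw [hcard]
  norm_num
  rw [← Finset.sum_finset_coe (fun g => R (g p)) Gset]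
  exact Fintype.sum_equiv (Equiv.setCongr hGKset) _ _ (fun _ => rfl)

theorem erase_eq' (R : Idx → ℝ) (p : Idx) :
    erase456 R p = (8:ℝ)⁻¹ * (R p + R (a456 p) + R ((a456*a456) p) + R ((a456*a456*a456) p)
      + R (g5 p) + R ((g5*a456) p) + R ((g5*a456*a456) p) + R ((g5*a456*a456*a456) p)) := by
  rw [erase_eq]
  congr 1
  rw [Gset]
  rw [Finset.sum_insert (by decide), Finset.sum_insert (by decide),
    Finset.sum_insert (by decide), Finset.sum_insert (by decide),
    Finset.sum_insert (by decide), Finset.sum_insert (by decide),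
    Finset.sum_insert (by decide), Finset.sum_singleton]
  simp only [Equiv.Perm.one_apply]
  ring

theorem CHSH_expand (R : Idx → ℝ) : CHSH R =
    (R (0,0,0,0) - R (0,1,0,0) - R (1,0,0,0) + R (1,1,0,0))
  + (R (0,0,1,0) - R (0,1,1,0) - R (1,0,1,0) + R (1,1,1,0))
  + (R (0,0,0,1) - R (0,1,0,1) - R (1,0,0,1) + R (1,1,0,1))
  - (R (0,0,1,1) - R (0,1,1,1) - R (1,0,1,1) + R (1,1,1,1)) := by
  simp [CHSH, corr, sgn, Fin.sum_univ_two]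
  ring

set_option maxHeartbeats 1600000 in
/-- `G456` has order 8, and its uniform mixture preserves the CHSH value and projects
every CHSH-type box with `CHSH(R) ≥ 2` onto the noisy-PR chain `{C(α) : α ∈ [0,1]}`. -/
theorem stmt_19 :
    Nat.card ↥G456 = 8 ∧
    ∀ R : Idx → ℝ, IsBox R → 2 ≤ CHSH R →
      CHSH (erase456 R) = CHSH R ∧ ∃ α ∈ Set.Icc (0:ℝ) 1, erase456 R = C α := by
  refine ⟨hcard, ?_⟩
  intro R hR hCH
  obtain ⟨hpos, hnorm, -, -⟩ := hR
  have hn : ∀ s t, R (0,0,s,t) + R (0,1,s,t) + R (1,0,s,t) + R (1,1,s,t) = 1 := by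
    intro s t
    have h := hnorm s t
    simp [Fin.sum_univ_two] at h
    linarith
  have hc := CHSH_expand R
  have hub : CHSH R ≤ 4 := by
    have h00 := hn 0 0; have h10 := hn 1 0; have h01 := hn 0 1; have h11 := hn 1 1
    linarith [hpos (0,0,0,0), hpos (0,1,0,0), hpos (1,0,0,0), hpos (1,1,0,0),
      hpos (0,0,1,0), hpos (0,1,1,0), hpos (1,0,1,0), hpos (1,1,1,0),
      hpos (0,0,0,1), hpos (0,1,0,1), hpos (1,0,0,1), hpos (1,1,0,1),
      hpos (0,0,1,1), hpos (0,1,1,1), hpos (1,0,1,1), hpos (1,1,1,1)]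
  have hE : erase456 R = C ((CHSH R - 2)/2) := by
    funext p
    obtain ⟨x, y, s, t⟩ := p
    rw [erase_eq']
    fin_cases x <;> fin_cases y <;> fin_cases s <;> fin_cases t <;>
      · simp [-Prod.mk_zero_zero, -Prod.mk_one_one, a456, Equiv.Perm.mul_apply, g5, g6,
          Function.Involutive.coe_toPerm, f5, f6, C, PRbox, LNPR]
        linarith [hn 0 0, hn 1 0, hn 0 1, hn 1 1]
  refine ⟨?_, (CHSH R - 2)/2, Set.mem_Icc.mpr ⟨by linarith, by linarith⟩, hE⟩
  rw [hE]
  simp [CHSH, corr, C, PRbox, LNPR, sgn, Fin.sum_univ_two]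
  linarith [hc]

end
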